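/- Let X₀ be an n×d real matrix, and let (A; B) be a full-rank (n+d)×d block matrix (A is n×d, B is d×d). If the largest sine of canonical angles between col((A;B)) and col((X₀;−I_d)) is strictly less than 1/√(1+‖X₀‖²), then B is nonsingular. -/

import Mathlib

noncomputable section
open Matrix

/-- Spectral (operator 2-) norm of a real matrix. -/
noncomputable def specNorm {m n : ℕ} (M : Matrix (Fin m) (Fin n) ℝ) : ℝ :=
  ‖LinearMap.toContinuousLinearMap (Matrix.toEuclideanLin M)‖

/-- Orthogonal projector onto a subspace, as a continuous linear map on the whole space. -/
noncomputable def projCLM {ι : Type*} [Fintype ι] (W : Submodule ℝ (EuclideanSpace ℝ ι)) :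
    EuclideanSpace ℝ ι →L[ℝ] EuclideanSpace ℝ ι :=
  W.subtypeL.comp (W.orthogonalProjection)

/-- ‖sin∠(V,W)‖ = ‖P_V (I − P_W)‖, the largest sine of canonical angles. -/
noncomputable def sinAngle {ι : Type*} [Fintype ι]
    (V W : Submodule ℝ (EuclideanSpace ℝ ι)) : ℝ :=
  ‖(projCLM V).comp (ContinuousLinearMap.id ℝ (EuclideanSpace ℝ ι) - projCLM W)‖

/-- Column space of a matrix, as a subspace of Euclidean space. -/
noncomputable def colSpaceE {ι κ : Type*} [Fintype ι] [Fintype κ] [DecidableEq κ]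
    (M : Matrix ι κ ℝ) : Submodule ℝ (EuclideanSpace ℝ ι) :=
  LinearMap.range (Matrix.toEuclideanLin M)

lemma euclid_norm_sq' {ι : Type*} [Fintype ι] (x : EuclideanSpace ℝ ι) :
    ‖x‖ ^ 2 = ∑ i, x i ^ 2 := by
  rw [EuclideanSpace.norm_eq, Real.sq_sqrt (by positivity)]
  simp [sq_abs]

lemma sinAngle_ge_aux {ι : Type*} [Fintype ι] (V W : Submodule ℝ (EuclideanSpace ℝ ι))
    (v : EuclideanSpace ℝ ι) (hv : v ∈ V) (hvn : v ≠ 0) (b : ℝ)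
    (hb : ∀ w ∈ W, b * ‖v‖ ≤ ‖v - w‖) : b ≤ sinAngle V W := by
  set T := (projCLM V).comp (ContinuousLinearMap.id ℝ (EuclideanSpace ℝ ι) - projCLM W) with hT
  have hsaV : IsSelfAdjoint (projCLM V) := isSelfAdjoint_starProjection V
  have hsaW : IsSelfAdjoint (projCLM W) := isSelfAdjoint_starProjection W
  have hadj : ContinuousLinearMap.adjoint T
      = (ContinuousLinearMap.id ℝ (EuclideanSpace ℝ ι) - projCLM W).comp (projCLM V) := by
    rw [hT, ContinuousLinearMap.adjoint_comp, map_sub, ContinuousLinearMap.adjoint_id,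
      hsaV.adjoint_eq, hsaW.adjoint_eq]
  have hPVv : projCLM V v = v := Submodule.starProjection_eq_self_iff.mpr hv
  have happ : (ContinuousLinearMap.adjoint T) v = v - projCLM W v := by
    rw [hadj]
    simp [ContinuousLinearMap.comp_apply, hPVv]
  have hmem : projCLM W v ∈ W := Submodule.coe_mem _
  have h1 : b * ‖v‖ ≤ ‖(ContinuousLinearMap.adjoint T) v‖ := by
    rw [happ]; exact hb _ hmem
  have hvpos : 0 < ‖v‖ := norm_pos_iff.mpr hvn
  have h2 : b ≤ ‖ContinuousLinearMap.adjoint T‖ := by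
    calc b = (b * ‖v‖) / ‖v‖ := by field_simp
      _ ≤ ‖(ContinuousLinearMap.adjoint T) v‖ / ‖v‖ := by gcongr
      _ ≤ ‖ContinuousLinearMap.adjoint T‖ := ContinuousLinearMap.ratio_le_opNorm _ v
  calc b ≤ ‖ContinuousLinearMap.adjoint T‖ := h2
    _ = ‖T‖ := LinearIsometryEquiv.norm_map ContinuousLinearMap.adjoint T
    _ = sinAngle V W := rfl

/-- If the largest sine of canonical angles between col((A;B)) and col((X₀;−I)) is less
than 1/√(1+‖X₀‖²), then the lower block B is nonsingular. -/
theorem lower_block_nonsingular {n d : ℕ}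
    (X₀ A : Matrix (Fin n) (Fin d) ℝ) (B : Matrix (Fin d) (Fin d) ℝ)
    (hrank : (Matrix.fromRows A B).rank = d)
    (hsin : sinAngle (colSpaceE (Matrix.fromRows A B))
        (colSpaceE (Matrix.fromRows X₀ (-1 : Matrix (Fin d) (Fin d) ℝ)))
      < 1 / Real.sqrt (1 + specNorm X₀ ^ 2)) :
    IsUnit B.det := by
  by_contra hB
  have hdet : B.det = 0 := by
    by_contra h; exact hB (isUnit_iff_ne_zero.mpr h)
  obtain ⟨c, hc0, hBc⟩ := Matrix.exists_mulVec_eq_zero_iff.mpr hdet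
  set M : Matrix (Fin n ⊕ Fin d) (Fin d) ℝ := Matrix.fromRows A B with hM
  set N : Matrix (Fin n ⊕ Fin d) (Fin d) ℝ := Matrix.fromRows X₀ (-1) with hN
  set σ : ℝ := specNorm X₀ with hσ
  set s : ℝ := Real.sqrt (1 + σ ^ 2) with hs
  have hσ0 : 0 ≤ σ := norm_nonneg _
  have hs2 : s ^ 2 = 1 + σ ^ 2 := Real.sq_sqrt (by positivity)
  have hspos : 0 < s := Real.sqrt_pos.mpr (by positivity)
  -- injectivity of M
  have hinj : Function.Injective M.mulVecLin := by
    rw [← LinearMap.ker_eq_bot, ← Submodule.finrank_eq_zero (R := ℝ)]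
    have h1 := LinearMap.finrank_range_add_finrank_ker M.mulVecLin
    have h2 : Module.finrank ℝ (Fin d → ℝ) = d := by simp
    rw [Matrix.rank] at hrank
    omega
  -- the vector v and its upper block uE
  set uE : EuclideanSpace ℝ (Fin n) := (WithLp.equiv 2 (Fin n → ℝ)).symm (A *ᵥ c) with huE
  set v : EuclideanSpace ℝ (Fin n ⊕ Fin d) := (WithLp.equiv 2 _).symm (M *ᵥ c) with hv
  have hvl : ∀ i : Fin n, v (Sum.inl i) = uE i := by
    intro i; simp [hv, huE, hM, Matrix.fromRows_mulVec]
  have hvr : ∀ j : Fin d, v (Sum.inr j) = 0 := by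
    intro j; simp [hv, hM, Matrix.fromRows_mulVec, hBc]
  have hune : uE ≠ 0 := by
    intro h
    apply hc0
    apply hinj
    show M.mulVecLin c = M.mulVecLin 0
    ext i
    cases i with
    | inl i =>
      have := congrFun (congrArg (WithLp.equiv 2 (Fin n → ℝ)) h) i
      simpa [huE, Matrix.mulVecLin_apply, hM, Matrix.fromRows_mulVec] using this
    | inr j => simp [Matrix.mulVecLin_apply, hM, Matrix.fromRows_mulVec, hBc]
  set r : ℝ := ‖uE‖ with hr
  have hrpos : 0 < r := norm_pos_iff.mpr hune
  have hvV : v ∈ colSpaceE M :=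
    ⟨(WithLp.equiv 2 (Fin d → ℝ)).symm c, by simp [hv, Matrix.toEuclideanLin_apply]⟩
  have hvsq : ‖v‖ ^ 2 = r ^ 2 := by
    rw [hr, euclid_norm_sq', euclid_norm_sq', Fintype.sum_sum_type]
    simp [hvl, hvr]
  have hvnorm : ‖v‖ = r := by
    have h1 : ‖v‖ = Real.sqrt (‖v‖ ^ 2) := (Real.sqrt_sq (norm_nonneg _)).symm
    rw [h1, hvsq, Real.sqrt_sq hrpos.le]
  -- distance bound to W
  have key : ∀ w ∈ colSpaceE N, r / s ≤ ‖v - w‖ := by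
    rintro w hwmem
    obtain ⟨y, hy⟩ := hwmem
    set zE : EuclideanSpace ℝ (Fin n) := Matrix.toEuclideanLin X₀ y with hz
    set a : ℝ := ‖uE - zE‖ with ha
    set t : ℝ := ‖y‖ with ht
    have ha0 : 0 ≤ a := norm_nonneg _
    have ht0 : 0 ≤ t := norm_nonneg _
    have hzle : ‖zE‖ ≤ σ * t := by
      have h := (LinearMap.toContinuousLinearMap (Matrix.toEuclideanLin X₀)).le_opNorm y
      simpa [hz, hσ, specNorm, ht] using h
    have hrle : r ≤ a + σ * t := by
      calc r = ‖(uE - zE) + zE‖ := by rw [sub_add_cancel]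
        _ ≤ ‖uE - zE‖ + ‖zE‖ := norm_add_le _ _
        _ ≤ a + σ * t := by rw [← ha]; linarith
    have hwl : ∀ i : Fin n, w (Sum.inl i) = zE i := by
      intro i
      rw [← hy]
      simp [hz, hN, Matrix.toEuclideanLin_apply, Matrix.fromRows_mulVec]
    have hwr : ∀ j : Fin d, w (Sum.inr j) = -(y j) := by
      intro j
      rw [← hy]
      simp [hN, Matrix.toEuclideanLin_apply, Matrix.fromRows_mulVec, Matrix.neg_mulVec]
    have hnormsq : ‖v - w‖ ^ 2 = a ^ 2 + t ^ 2 := by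
      have h1 : a ^ 2 = ∑ i, (uE i - zE i) ^ 2 := by
        rw [ha, euclid_norm_sq']
        exact Finset.sum_congr rfl fun i _ => by rw [PiLp.sub_apply]
      have h2 : t ^ 2 = ∑ j, y j ^ 2 := by rw [ht, euclid_norm_sq']
      rw [euclid_norm_sq', Fintype.sum_sum_type, h1, h2]
      congr 1
      · exact Finset.sum_congr rfl fun i _ => by
          rw [PiLp.sub_apply, hvl, hwl]
      · exact Finset.sum_congr rfl fun j _ => by
          rw [PiLp.sub_apply, hvr, hwr]
          ring
    have hsq : (r / s) ^ 2 ≤ ‖v - w‖ ^ 2 := by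
      rw [hnormsq, div_pow, hs2, div_le_iff₀ (by positivity)]
      nlinarith [sq_nonneg (a * σ - t)]
    have hnn : (0:ℝ) ≤ r / s := by positivity
    have hfin := Real.sqrt_le_sqrt hsq
    rwa [Real.sqrt_sq hnn, Real.sqrt_sq (norm_nonneg _)] at hfin
  -- conclude via the aux lemma
  have hvne : v ≠ 0 := by
    intro h
    rw [h, norm_zero] at hvnorm
    exact hrpos.ne hvnorm
  have hb : ∀ w ∈ colSpaceE N, (1 / s) * ‖v‖ ≤ ‖v - w‖ := by
    intro w hw
    rw [hvnorm]
    have h := key w hw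
    calc (1 / s) * r = r / s := by ring
      _ ≤ ‖v - w‖ := h
  have hfinal : 1 / s ≤ sinAngle (colSpaceE M) (colSpaceE N) :=
    sinAngle_ge_aux _ _ v hvV hvne _ hb
  rw [hM, hN] at hfinal
  linarith
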